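/- An infinite normal subgroup of infinite index in a word hyperbolic group is not quasiconvex. -/

import Mathlib

/-- `S` is a finite generating set of the group `G`. -/
def IsFinGenSet {G : Type*} [Group G] (S : Set G) : Prop :=
  S.Finite ∧ Subgroup.closure S = ⊤

/-- The word length of `g` with respect to the (symmetrized) generating set `S`. -/
noncomputable def wordLength {G : Type*} [Group G] (S : Set G) (g : G) : ℕ :=
  sInf {n : ℕ | ∃ w : List G, w.length = n ∧ (∀ x ∈ w, x ∈ S ∨ x⁻¹ ∈ S) ∧ w.prod = g}

/-- The word metric on `G` associated to the generating set `S`. -/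
noncomputable def wordDist {G : Type*} [Group G] (S : Set G) (g h : G) : ℕ :=
  wordLength S (g⁻¹ * h)

/-- `p` is a geodesic (edge-)path in the Cayley graph `Γ(G,S)` from `g` to `h`. -/
def IsGeodesic {G : Type*} [Group G] (S : Set G) (p : List G) (g h : G) : Prop :=
  p.head? = some g ∧ p.getLast? = some h ∧
  List.Chain' (fun a b => wordDist S a b = 1) p ∧
  p.length = wordDist S g h + 1

/-- A subgroup `H ≤ G` is quasiconvex with respect to the generating set `S` if every
geodesic in the Cayley graph with both endpoints in `H` stays in a bounded
neighborhood of `H`. -/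
def IsQuasiconvex {G : Type*} [Group G] (S : Set G) (H : Subgroup G) : Prop :=
  ∃ ε : ℕ, ∀ g ∈ H, ∀ h ∈ H, ∀ p : List G, IsGeodesic S p g h →
    ∀ x ∈ p, ∃ k ∈ H, wordDist S x k ≤ ε

/-- The Gromov product `(x|y)_w` in the word metric. -/
noncomputable def gromovProd {G : Type*} [Group G] (S : Set G) (w x y : G) : ℝ :=
  ((wordDist S w x : ℝ) + (wordDist S w y : ℝ) - (wordDist S x y : ℝ)) / 2

/-- `G` is word hyperbolic with respect to `S`: the Gromov product satisfies the
`δ`-hyperbolic four point inequality. -/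
def IsHyperbolic {G : Type*} [Group G] (S : Set G) : Prop :=
  ∃ δ : ℝ, 0 ≤ δ ∧ ∀ w x y z : G,
    min (gromovProd S w x z) (gromovProd S w z y) - δ ≤ gromovProd S w x y

section Basics
variable {G : Type*} [Group G] {S : Set G}

/-- Any word gives an upper bound. -/
lemma wordLength_le {g : G} {w : List G} (hw : ∀ x ∈ w, x ∈ S ∨ x⁻¹ ∈ S)
    (hp : w.prod = g) : wordLength S g ≤ w.length :=
  Nat.sInf_le ⟨w, rfl, hw, hp⟩

/-- Generation gives existence of a word for each element. -/
lemma exists_word (hgen : Subgroup.closure S = ⊤) (g : G) :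
    ∃ w : List G, (∀ x ∈ w, x ∈ S ∨ x⁻¹ ∈ S) ∧ w.prod = g := by
  have hg : g ∈ Subgroup.closure S := by rw [hgen]; trivial
  induction hg using Subgroup.closure_induction with
  | mem x hx => exact ⟨[x], by simpa using Or.inl hx, by simp⟩
  | one => exact ⟨[], by simp, by simp⟩
  | mul a b _ _ iha ihb =>
      obtain ⟨u, hu, hup⟩ := iha
      obtain ⟨v, hv, hvp⟩ := ihb
      refine ⟨u ++ v, ?_, by simp [hup, hvp]⟩
      intro x hx
      rcases List.mem_append.1 hx with h | h
      exacts [hu x h, hv x h]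
  | inv a _ ih =>
      obtain ⟨u, hu, hup⟩ := ih
      refine ⟨(u.map (fun x => x⁻¹)).reverse, ?_, ?_⟩
      · intro x hx
        simp only [List.mem_reverse, List.mem_map] at hx
        obtain ⟨y, hy, rfl⟩ := hx
        rcases hu y hy with h | h
        · exact Or.inr (by simpa using h)
        · exact Or.inl h
      · rw [← List.prod_inv_reverse, hup]

/-- The infimum is attained. -/
lemma exists_min_word (hgen : Subgroup.closure S = ⊤) (g : G) :
    ∃ w : List G, w.length = wordLength S g ∧ (∀ x ∈ w, x ∈ S ∨ x⁻¹ ∈ S) ∧ w.prod = g := by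
  have hne : {n : ℕ | ∃ w : List G, w.length = n ∧ (∀ x ∈ w, x ∈ S ∨ x⁻¹ ∈ S) ∧
      w.prod = g}.Nonempty := by
    obtain ⟨w, hw, hp⟩ := exists_word hgen g
    exact ⟨w.length, w, rfl, hw, hp⟩
  exact Nat.sInf_mem hne

lemma wordLength_one : wordLength S (1 : G) = 0 :=
  Nat.le_zero.1 (wordLength_le (w := []) (by simp) (by simp))

lemma eq_one_of_wordLength_eq_zero (hgen : Subgroup.closure S = ⊤) {g : G}
    (h : wordLength S g = 0) : g = 1 := by
  obtain ⟨w, hl, _, hp⟩ := exists_min_word hgen g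
  rw [h, List.length_eq_zero_iff] at hl
  subst hl; simpa using hp.symm

lemma wordLength_mul_le (hgen : Subgroup.closure S = ⊤) (a b : G) :
    wordLength S (a * b) ≤ wordLength S a + wordLength S b := by
  obtain ⟨u, hul, hu, hup⟩ := exists_min_word hgen a
  obtain ⟨v, hvl, hv, hvp⟩ := exists_min_word hgen b
  have hletters : ∀ x ∈ u ++ v, x ∈ S ∨ x⁻¹ ∈ S := by
    intro x hx
    rcases List.mem_append.1 hx with h | h
    exacts [hu x h, hv x h]
  calc wordLength S (a * b) ≤ (u ++ v).length :=
        wordLength_le hletters (by simp [hup, hvp])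
    _ = wordLength S a + wordLength S b := by simp [hul, hvl]

lemma wordLength_inv_le (hgen : Subgroup.closure S = ⊤) (a : G) :
    wordLength S a⁻¹ ≤ wordLength S a := by
  obtain ⟨u, hul, hu, hup⟩ := exists_min_word hgen a
  calc wordLength S a⁻¹ ≤ ((u.map (fun x => x⁻¹)).reverse).length := by
        refine wordLength_le ?_ (by rw [← List.prod_inv_reverse, hup])
        intro x hx
        simp only [List.mem_reverse, List.mem_map] at hx
        obtain ⟨y, hy, rfl⟩ := hx
        rcases hu y hy with h | h
        · exact Or.inr (by simpa using h)
        · exact Or.inl h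
    _ = wordLength S a := by simp [hul]

lemma wordLength_inv (hgen : Subgroup.closure S = ⊤) (a : G) :
    wordLength S a⁻¹ = wordLength S a :=
  le_antisymm (wordLength_inv_le hgen a) (by simpa using wordLength_inv_le hgen a⁻¹)

lemma wordDist_self (g : G) : wordDist S g g = 0 := by
  simp [wordDist, wordLength_one]

lemma wordDist_comm (hgen : Subgroup.closure S = ⊤) (g h : G) :
    wordDist S g h = wordDist S h g := by
  unfold wordDist
  rw [← wordLength_inv hgen (g⁻¹ * h)]; simp

lemma wordDist_triangle (hgen : Subgroup.closure S = ⊤) (g k h : G) :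
    wordDist S g h ≤ wordDist S g k + wordDist S k h := by
  unfold wordDist
  have : g⁻¹ * h = (g⁻¹ * k) * (k⁻¹ * h) := by group
  rw [this]; exact wordLength_mul_le hgen _ _

lemma wordDist_left_invariant (k g h : G) :
    wordDist S (k * g) (k * h) = wordDist S g h := by
  unfold wordDist; congr 1; group

lemma eq_of_wordDist_eq_zero (hgen : Subgroup.closure S = ⊤) {g h : G}
    (hd : wordDist S g h = 0) : g = h := by
  have h1 : g⁻¹ * h = 1 := eq_one_of_wordLength_eq_zero hgen hd
  have h2 : h = g * (g⁻¹ * h) := by group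
  rw [h2, h1]; group

end Basics

section Geodesic
variable {G : Type*} [Group G] {S : Set G}

lemma IsGeodesic.length_pos {p : List G} {g h : G} (hp : IsGeodesic S p g h) :
    0 < p.length := by
  rcases p with _ | ⟨a, q⟩
  · simp [IsGeodesic] at hp
  · simp

lemma IsGeodesic.get_zero {p : List G} {g h : G} (hp : IsGeodesic S p g h) :
    p.get ⟨0, hp.length_pos⟩ = g := by
  rcases p with _ | ⟨a, q⟩
  · simp [IsGeodesic] at hp
  · have := hp.1; simp at this; simpa using this

lemma IsGeodesic.get_last {p : List G} {g h : G} (hp : IsGeodesic S p g h) :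
    p.get ⟨p.length - 1, Nat.sub_lt hp.length_pos Nat.one_pos⟩ = h := by
  have hpos := hp.length_pos
  have h2 := hp.2.1
  rw [List.getLast?_eq_getElem?] at h2
  have : p[p.length - 1]? = some p[p.length-1] := List.getElem?_eq_getElem (by omega)
  rw [this] at h2
  simp at h2; simpa using h2

lemma chain_dist_le (hgen : Subgroup.closure S = ⊤) {p : List G}
    (hc : List.Chain' (fun a b => wordDist S a b = 1) p) :
    ∀ j (hj : j < p.length), ∀ i, ∀ hij : i ≤ j,
      wordDist S (p.get ⟨i, lt_of_le_of_lt hij hj⟩) (p.get ⟨j, hj⟩) ≤ j - i := by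
  intro j
  induction j with
  | zero =>
      intro hj i hij
      interval_cases i
      simp [wordDist_self]
  | succ n ih =>
      intro hj i hij
      rcases Nat.lt_or_ge i (n+1) with hlt | hge
      · have hi' : i ≤ n := by omega
        have hstep : wordDist S (p.get ⟨n, by omega⟩) (p.get ⟨n+1, hj⟩) = 1 := by
          have := List.isChain_iff_getElem.1 hc n (by omega)
          convert this using 2 <;> rfl
        calc wordDist S (p.get ⟨i, _⟩) (p.get ⟨n+1, hj⟩)
            ≤ wordDist S (p.get ⟨i, by omega⟩) (p.get ⟨n, by omega⟩)
              + wordDist S (p.get ⟨n, by omega⟩) (p.get ⟨n+1, hj⟩) :=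
              wordDist_triangle hgen _ _ _
          _ ≤ (n - i) + 1 := by
              have := ih (by omega) i hi'
              omega
          _ ≤ (n + 1) - i := by omega
      · have : i = n + 1 := by omega
        subst this
        simp [wordDist_self]

lemma IsGeodesic.dist_get (hgen : Subgroup.closure S = ⊤) {p : List G} {g h : G}
    (hp : IsGeodesic S p g h) (i : ℕ) (hi : i < p.length) :
    wordDist S g (p.get ⟨i, hi⟩) = i ∧
    wordDist S (p.get ⟨i, hi⟩) h = wordDist S g h - i ∧ i ≤ wordDist S g h := by
  have hlen : p.length = wordDist S g h + 1 := hp.2.2.2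
  set L := wordDist S g h with hL
  have h0 : p.get ⟨0, hp.length_pos⟩ = g := hp.get_zero
  have hlast : p.get ⟨p.length - 1, Nat.sub_lt hp.length_pos Nat.one_pos⟩ = h := hp.get_last
  have ha : wordDist S g (p.get ⟨i, hi⟩) ≤ i := by
    have := chain_dist_le hgen hp.2.2.1 i hi 0 (Nat.zero_le _)
    rw [h0] at this
    simpa using this
  have hb : wordDist S (p.get ⟨i, hi⟩) h ≤ L - i := by
    have := chain_dist_le hgen hp.2.2.1 (p.length - 1)
      (Nat.sub_lt hp.length_pos Nat.one_pos) i (by omega)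
    rw [hlast] at this
    have hi' : i ≤ L := by omega
    omega
  have htri : L ≤ wordDist S g (p.get ⟨i, hi⟩) + wordDist S (p.get ⟨i, hi⟩) h :=
    wordDist_triangle hgen g _ h
  refine ⟨by omega, by omega, by omega⟩

end Geodesic

section Exists
variable {G : Type*} [Group G] {S : Set G}

lemma exists_geodesic (hgen : Subgroup.closure S = ⊤) (g h : G) :
    ∃ p : List G, IsGeodesic S p g h ∧
      ∀ i (hi : i < p.length), p.get ⟨i, hi⟩ = g * ((Classical.choose
        (exists_min_word hgen (g⁻¹ * h))).take i).prod := by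
  obtain ⟨hl, hw, hp⟩ := Classical.choose_spec (exists_min_word hgen (g⁻¹ * h))
  set w := Classical.choose (exists_min_word hgen (g⁻¹ * h)) with hwdef
  set n := wordLength S (g⁻¹ * h) with hn
  have hln : w.length = n := hl
  refine ⟨(List.range (n+1)).map (fun i => g * (w.take i).prod), ?_, ?_⟩
  swap
  · intro i hi
    simp only [List.get_eq_getElem, List.getElem_map, List.getElem_range]
  have hlen : ((List.range (n+1)).map (fun i => g * (w.take i).prod)).length = n + 1 := by simp
  have hget : ∀ i (hi : i < n + 1),
      ((List.range (n+1)).map (fun i => g * (w.take i).prod))[i]'(by simpa using hi)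
        = g * (w.take i).prod := by
    intro i hi
    simp only [List.getElem_map, List.getElem_range]
  refine ⟨?_, ?_, ?_, by rw [hlen]; rfl⟩
  · rw [List.head?_eq_getElem?, List.getElem?_eq_getElem (by omega)]
    rw [hget 0 (by omega)]
    simp
  · rw [List.getLast?_eq_getElem?, hlen]
    have : n + 1 - 1 = n := by omega
    rw [this, List.getElem?_eq_getElem (by simp), hget n (by omega)]
    rw [List.take_of_length_le (by omega), hp]
    simp [mul_assoc]
  · refine List.isChain_iff_getElem.2 ?_
    intro i hi
    rw [hlen] at hi
    rw [hget i (by omega), hget (i+1) (by omega)]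
    rw [wordDist_left_invariant]
    have hiw : i < w.length := by omega
    have htake : (w.take (i+1)).prod = (w.take i).prod * w[i] := List.prod_take_succ w i hiw
    have hdist : wordDist S (w.take i).prod (w.take (i+1)).prod = wordLength S w[i] := by
      unfold wordDist
      rw [htake]
      congr 1
      group
    rw [hdist]
    have hle : wordLength S w[i] ≤ 1 := by
      have := wordLength_le (S := S) (w := [w[i]]) (g := w[i]) ?_ (by simp)
      · simpa using this
      · intro x hx
        simp at hx
        subst hx
        exact hw _ (List.getElem_mem hiw)
    have hne : wordLength S w[i] ≠ 0 := by
      intro h0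
      have hone : w[i] = 1 := eq_one_of_wordLength_eq_zero hgen h0
      have herase : (w.eraseIdx i).prod = g⁻¹ * h := by
        rw [List.eraseIdx_eq_take_drop_succ, List.prod_append]
        have hsplit : w = w.take (i+1) ++ w.drop (i+1) := (List.take_append_drop _ _).symm
        calc (w.take i).prod * (w.drop (i+1)).prod
            = ((w.take i).prod * w[i]) * (w.drop (i+1)).prod := by rw [hone]; group
          _ = (w.take (i+1)).prod * (w.drop (i+1)).prod := by rw [htake]
          _ = w.prod := by rw [← List.prod_append, ← hsplit]
          _ = g⁻¹ * h := hp
      have hlt : wordLength S (g⁻¹ * h) ≤ (w.eraseIdx i).length :=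
        wordLength_le (fun x hx => hw x (List.mem_of_mem_eraseIdx hx)) herase
      rw [List.length_eraseIdx] at hlt
      simp [hiw] at hlt
      omega
    omega

end Exists

section Ball
variable {G : Type*} [Group G] {S : Set G}

lemma ball_finite (hfin : S.Finite) (hgen : Subgroup.closure S = ⊤) (R : ℕ) :
    {g : G | wordLength S g ≤ R}.Finite := by
  have hT : {x : G | x ∈ S ∨ x⁻¹ ∈ S}.Finite := by
    have : {x : G | x ∈ S ∨ x⁻¹ ∈ S} = S ∪ (fun x => x⁻¹) '' S := by
      ext x
      simp only [Set.mem_setOf_eq, Set.mem_union, Set.mem_image]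
      constructor
      · rintro (h | h)
        · exact Or.inl h
        · exact Or.inr ⟨x⁻¹, h, by simp⟩
      · rintro (h | ⟨y, hy, rfl⟩)
        · exact Or.inl h
        · exact Or.inr (by simpa using hy)
    rw [this]
    exact hfin.union (hfin.image _)
  induction R with
  | zero =>
      have hsub : {g : G | wordLength S g ≤ 0} ⊆ {(1 : G)} := by
        intro g hg
        simp only [Set.mem_setOf_eq, Nat.le_zero] at hg
        simp [eq_one_of_wordLength_eq_zero hgen hg]
      exact (Set.finite_singleton _).subset hsub
  | succ R ih =>
      have hsub : {g : G | wordLength S g ≤ R + 1} ⊆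
          Set.image2 (fun a b => a * b) {g : G | wordLength S g ≤ R}
            (insert 1 {x : G | x ∈ S ∨ x⁻¹ ∈ S}) := by
        intro g hg
        simp only [Set.mem_setOf_eq] at hg
        obtain ⟨w, hwl, hw, hwp⟩ := exists_min_word hgen g
        rcases eq_or_ne w [] with rfl | hne
        · refine ⟨1, ?_, 1, by simp, by simpa using hwp⟩
          simp [wordLength_one]
        · have hpos : 0 < w.length := List.length_pos_iff.2 hne
          have hsplit : w = w.dropLast ++ [w.getLast hne] := (List.dropLast_append_getLast hne).symm
          refine ⟨w.dropLast.prod, ?_, w.getLast hne, ?_, ?_⟩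
          · have h1 : wordLength S w.dropLast.prod ≤ w.dropLast.length :=
              wordLength_le (fun x hx => hw x (List.dropLast_subset w hx)) rfl
            have h2 : w.dropLast.length = w.length - 1 := List.length_dropLast
            simp only [Set.mem_setOf_eq]
            omega
          · exact Or.inr (hw _ (List.getLast_mem hne))
          · calc w.dropLast.prod * w.getLast hne
                = (w.dropLast ++ [w.getLast hne]).prod := by simp
              _ = w.prod := by rw [← hsplit]
              _ = g := hwp
      exact (Set.Finite.image2 _ ih (hT.insert 1)).subset hsub

lemma exists_long_element (hfin : S.Finite) (hgen : Subgroup.closure S = ⊤)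
    (F : Subgroup G) (hinf : Infinite F) (R : ℕ) :
    ∃ f ∈ F, R < wordLength S f := by
  have hFinf : (F : Set G).Infinite := by
    rw [← Set.infinite_coe_iff]
    exact hinf
  have hdiff := hFinf.diff (ball_finite hfin hgen R)
  obtain ⟨f, hf⟩ := hdiff.nonempty
  exact ⟨f, hf.1, by simpa using Nat.lt_of_not_le (by simpa [Set.mem_setOf_eq] using hf.2)⟩

end Ball

section Slim
variable {G : Type*} [Group G] {S : Set G}

lemma slim_lemma (hgen : Subgroup.closure S = ⊤) {δ : ℝ} (hδ : 0 ≤ δ)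
    (hhyp : ∀ w x y z : G, min (gromovProd S w x z) (gromovProd S w z y) - δ
      ≤ gromovProd S w x y)
    {x y h m : G} (hm : wordDist S x m + wordDist S m y = wordDist S x y)
    (ha : (wordDist S x m : ℝ) ≤ gromovProd S x y h)
    {q : List G} (hq : IsGeodesic S q x h) :
    ∃ z ∈ q, (wordDist S m z : ℝ) ≤ 4 * δ := by
  set a := wordDist S x m with hadef
  -- a ≤ d(x,h)
  have htri : wordDist S x y ≤ wordDist S x h + wordDist S h y := wordDist_triangle hgen _ _ _
  have hcomm : wordDist S h y = wordDist S y h := wordDist_comm hgen _ _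
  have haxh : a ≤ wordDist S x h := by
    have h1 : (a : ℝ) ≤ ((wordDist S x y : ℝ) + (wordDist S x h : ℝ)
        - (wordDist S y h : ℝ)) / 2 := ha
    have h2 : (wordDist S x y : ℝ) ≤ (wordDist S x h : ℝ) + (wordDist S y h : ℝ) := by
      rw [← hcomm]
      exact_mod_cast htri
    have : (a : ℝ) ≤ (wordDist S x h : ℝ) := by linarith
    exact_mod_cast this
  have hq_len : q.length = wordDist S x h + 1 := hq.2.2.2
  have hia : a < q.length := by omega
  set z := q.get ⟨a, hia⟩ with hzdef
  have hz := hq.dist_get hgen a hia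
  have hxz : wordDist S x z = a := hz.1
  have hzh : wordDist S z h = wordDist S x h - a := hz.2.1
  refine ⟨z, List.get_mem q ⟨a, hia⟩, ?_⟩
  -- real valued distances
  have exz : (wordDist S x z : ℝ) = a := by exact_mod_cast hxz
  have ezh : (wordDist S z h : ℝ) = (wordDist S x h : ℝ) - a := by
    rw [hzh]
    exact Nat.cast_sub haxh
  have emy : (wordDist S m y : ℝ) = (wordDist S x y : ℝ) - a := by
    have : (a : ℝ) + (wordDist S m y : ℝ) = (wordDist S x y : ℝ) := by exact_mod_cast hm
    linarith
  have hPxmy : gromovProd S x m y = a := by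
    unfold gromovProd
    rw [emy, hadef]
    ring
  have hPxhz : gromovProd S x h z = a := by
    unfold gromovProd
    have : wordDist S h z = wordDist S z h := wordDist_comm hgen _ _
    rw [this, exz, ezh]
    ring
  have hyp2 := hhyp x y z h
  have hyp1 := hhyp x m z y
  rw [hPxhz] at hyp2
  rw [hPxmy] at hyp1
  have hPxyz : (a : ℝ) - δ ≤ gromovProd S x y z := by
    have hmin : (a : ℝ) ≤ min (gromovProd S x y h) (a : ℝ) := le_min ha le_rfl
    linarith [hyp2]
  have hPxmz : (a : ℝ) - 2 * δ ≤ gromovProd S x m z := by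
    have hmin : (a : ℝ) - δ ≤ min (a : ℝ) (gromovProd S x y z) :=
      le_min (by linarith) hPxyz
    linarith [hyp1]
  have hexpand : gromovProd S x m z
      = ((a : ℝ) + (a : ℝ) - (wordDist S m z : ℝ)) / 2 := by
    unfold gromovProd
    rw [exz, hadef]
  rw [hexpand] at hPxmz
  linarith

end Slim

section Main
variable {G : Type*} [Group G] {S : Set G}

lemma wordDist_one_left (g : G) : wordDist S 1 g = wordLength S g := by
  simp [wordDist]

lemma point_on_geodesic (hgen : Subgroup.closure S = ⊤) {p : List G} {g h z : G}
    (hp : IsGeodesic S p g h) (hz : z ∈ p) :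
    wordDist S g z + wordDist S z h = wordDist S g h := by
  obtain ⟨i, hi, rfl⟩ := List.mem_iff_get.1 hz
  obtain ⟨h1, h2, h3⟩ := hp.dist_get hgen i i.2
  simp only [Fin.eta] at h1 h2
  omega

/-- Key bound: if `F` is `ε`-quasiconvex, every coset of `F` has a representative of
word length at most `2ε + ⌈8δ⌉`. -/
lemma key_bound (hfin : S.Finite) (hgen : Subgroup.closure S = ⊤)
    {δ : ℝ} (hδ : 0 ≤ δ)
    (hfour : ∀ w x y z : G, min (gromovProd S w x z) (gromovProd S w z y) - δ
      ≤ gromovProd S w x y)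
    (F : Subgroup G) [F.Normal] (hinf : Infinite F)
    {ε : ℕ} (hqc : ∀ g ∈ F, ∀ h ∈ F, ∀ p : List G, IsGeodesic S p g h →
      ∀ x ∈ p, ∃ k ∈ F, wordDist S x k ≤ ε)
    (g : G) :
    ∃ g₀ : G, g⁻¹ * g₀ ∈ F ∧ wordLength S g₀ ≤ 2 * ε + Nat.ceil (8 * δ) := by
  set D : ℕ := Nat.ceil (8 * δ) with hD
  have hDδ : 8 * δ ≤ (D : ℝ) := Nat.le_ceil _
  -- the minimal length coset representative
  set CS : Set ℕ := {n : ℕ | ∃ u : G, g⁻¹ * u ∈ F ∧ wordLength S u = n} with hCS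
  have hCSne : CS.Nonempty := ⟨wordLength S g, g, by simpa using F.one_mem, rfl⟩
  obtain ⟨g₀, hg₀F, hg₀len⟩ := Nat.sInf_mem hCSne
  set n : ℕ := wordLength S g₀ with hn
  have hmin : ∀ u : G, g⁻¹ * u ∈ F → n ≤ wordLength S u := by
    intro u hu
    rw [hg₀len]
    exact Nat.sInf_le ⟨u, hu, rfl⟩
  refine ⟨g₀, hg₀F, ?_⟩
  rw [← hn]
  -- choose a long element of F
  obtain ⟨f, hfF, hflen⟩ := exists_long_element hfin hgen F hinf (2*n + 2*D + 2)
  set L : ℕ := wordDist S 1 f with hL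
  have hLlen : L = wordLength S f := wordDist_one_left f
  have hLbig : 2*n + 2*D + 2 < L := by rw [hLlen]; exact hflen
  set L1 : ℕ := n + D + 1 with hL1
  -- geodesic from 1 to f
  obtain ⟨p', hp', -⟩ := exists_geodesic hgen 1 f
  have hp'len : p'.length = L + 1 := hp'.2.2.2
  have hL1lt : L1 < p'.length := by omega
  set m' : G := p'.get ⟨L1, hL1lt⟩ with hm'def
  obtain ⟨hA, hB, hC⟩ := hp'.dist_get hgen L1 hL1lt
  set m : G := g₀ * m' with hmdef
  set hh : G := g₀ * f * g₀⁻¹ with hhhdef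
  have hhhF : hh ∈ F := by
    have := Subgroup.Normal.conj_mem ‹F.Normal› f hfF g₀
    simpa [hhhdef, mul_assoc] using this
  -- basic distances
  have d1 : wordDist S g₀ m = L1 := by
    have h' := wordDist_left_invariant (S := S) g₀ 1 m'
    rw [mul_one] at h'
    rw [hmdef, h', hA]
  have d2 : wordDist S m (g₀ * f) = L - L1 := by
    have h' := wordDist_left_invariant (S := S) g₀ m' f
    rw [hmdef, h', hB]
  have d3 : wordDist S g₀ (g₀ * f) = L := by
    have h' := wordDist_left_invariant (S := S) g₀ 1 f
    rw [mul_one] at h'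
    rw [h', hL]
  have d4 : wordDist S (g₀ * f) hh = n := by
    show wordLength S ((g₀ * f)⁻¹ * (g₀ * f * g₀⁻¹)) = n
    rw [show (g₀ * f)⁻¹ * (g₀ * f * g₀⁻¹) = g₀⁻¹ by group, wordLength_inv hgen, hn]
  have d5 : wordDist S g₀ 1 = n := by
    rw [wordDist_comm hgen, wordDist_one_left, hn]
  -- first slim triangle: m is close to a geodesic from g₀ * f to 1
  have e1 : wordDist S (g₀ * f) m = L - L1 := by rw [wordDist_comm hgen, d2]
  have e1R : (wordDist S (g₀ * f) m : ℝ) = (L : ℝ) - L1 := by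
    rw [e1]; exact Nat.cast_sub (by omega)
  have e2 : wordDist S m g₀ = L1 := by rw [wordDist_comm hgen, d1]
  have e3 : wordDist S (g₀ * f) g₀ = L := by rw [wordDist_comm hgen, d3]
  have hm1 : wordDist S (g₀ * f) m + wordDist S m g₀ = wordDist S (g₀ * f) g₀ := by
    rw [e1, e2, e3]; omega
  have t1 : L ≤ n + wordDist S 1 (g₀ * f) := by
    have := wordDist_triangle hgen g₀ 1 (g₀ * f)
    rw [d3, d5] at this
    omega
  have ey1 : wordDist S (g₀ * f) 1 = wordDist S 1 (g₀ * f) := wordDist_comm hgen _ _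
  have ha1 : (wordDist S (g₀ * f) m : ℝ) ≤ gromovProd S (g₀ * f) g₀ 1 := by
    unfold gromovProd
    rw [e3, ey1]
    have h5R : (wordDist S g₀ 1 : ℝ) = n := by exact_mod_cast d5
    have t1R : (L : ℝ) ≤ (n : ℝ) + (wordDist S 1 (g₀ * f) : ℝ) := by exact_mod_cast t1
    have hL1R : (L1 : ℝ) = (n : ℝ) + D + 1 := by rw [hL1]; push_cast; ring
    rw [e1R, h5R]
    have hDnn : (0:ℝ) ≤ D := Nat.cast_nonneg D
    linarith
  obtain ⟨q1, hq1, -⟩ := exists_geodesic hgen (g₀ * f) 1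
  obtain ⟨z₁, hz₁q, hz₁d⟩ := slim_lemma hgen hδ hfour hm1 ha1 hq1
  have pos1 : wordDist S (g₀ * f) z₁ + wordDist S z₁ 1 = wordDist S (g₀ * f) 1 :=
    point_on_geodesic hgen hq1 hz₁q
  -- second slim triangle: z₁ is close to a geodesic from 1 to hh
  have hm2 : wordDist S 1 z₁ + wordDist S z₁ (g₀ * f) = wordDist S 1 (g₀ * f) := by
    rw [wordDist_comm hgen 1 z₁, wordDist_comm hgen z₁ (g₀ * f), ← ey1]
    omega
  have u2 : wordDist S 1 (g₀ * f) ≤ wordDist S 1 hh + n := by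
    have := wordDist_triangle hgen 1 hh (g₀ * f)
    rw [wordDist_comm hgen hh (g₀ * f), d4] at this
    exact this
  have u4 : (L : ℝ) - L1 - 4 * δ ≤ (wordDist S (g₀ * f) z₁ : ℝ) := by
    have htr := wordDist_triangle hgen (g₀ * f) z₁ m
    have htrR : (wordDist S (g₀ * f) m : ℝ)
        ≤ (wordDist S (g₀ * f) z₁ : ℝ) + (wordDist S z₁ m : ℝ) := by exact_mod_cast htr
    have hcm : (wordDist S z₁ m : ℝ) = (wordDist S m z₁ : ℝ) := by
      rw [wordDist_comm hgen]
    rw [e1R] at htrR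
    linarith
  have ha2 : (wordDist S 1 z₁ : ℝ) ≤ gromovProd S 1 (g₀ * f) hh := by
    unfold gromovProd
    have u2R : (wordDist S 1 (g₀ * f) : ℝ) ≤ (wordDist S 1 hh : ℝ) + n := by
      exact_mod_cast u2
    have d4R : (wordDist S (g₀ * f) hh : ℝ) = n := by exact_mod_cast d4
    have hm2R : (wordDist S 1 z₁ : ℝ) + (wordDist S z₁ (g₀ * f) : ℝ)
        = (wordDist S 1 (g₀ * f) : ℝ) := by exact_mod_cast hm2
    have hz1y : (wordDist S z₁ (g₀ * f) : ℝ) = (wordDist S (g₀ * f) z₁ : ℝ) := by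
      rw [wordDist_comm hgen]
    have hL1R : (L1 : ℝ) = (n : ℝ) + D + 1 := by rw [hL1]; push_cast; ring
    have hLbigR : (2*(n:ℝ) + 2*D + 3) ≤ (L : ℝ) := by exact_mod_cast hLbig
    rw [d4R]
    linarith
  obtain ⟨q2, hq2, -⟩ := exists_geodesic hgen 1 hh
  obtain ⟨z₂, hz₂q, hz₂d⟩ := slim_lemma hgen hδ hfour hm2 ha2 hq2
  -- quasiconvexity
  have hm'mem : m' ∈ p' := List.get_mem p' _
  obtain ⟨f₁, hf₁F, hf₁d⟩ := hqc 1 F.one_mem f hfF p' hp' m' hm'mem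
  obtain ⟨k, hkF, hkd⟩ := hqc 1 F.one_mem hh hhhF q2 hq2 z₂ hz₂q
  -- assemble the final bound
  set s : G := k⁻¹ * (g₀ * f₁) with hsdef
  have hsF : g⁻¹ * s ∈ F := by
    have hc : g⁻¹ * k⁻¹ * g ∈ F := by
      have := Subgroup.Normal.conj_mem ‹F.Normal› k⁻¹ (F.inv_mem hkF) g⁻¹
      simpa using this
    have hrw : g⁻¹ * s = ((g⁻¹ * k⁻¹ * g) * (g⁻¹ * g₀)) * f₁ := by rw [hsdef]; group
    rw [hrw]
    exact F.mul_mem (F.mul_mem hc hg₀F) hf₁F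
  have hslen : wordLength S s = wordDist S k (g₀ * f₁) := rfl
  have htr1 := wordDist_triangle hgen k z₂ (g₀ * f₁)
  have htr2 := wordDist_triangle hgen z₂ z₁ (g₀ * f₁)
  have htr3 := wordDist_triangle hgen z₁ m (g₀ * f₁)
  have hkz : (wordDist S k z₂ : ℝ) ≤ ε := by
    rw [wordDist_comm hgen]
    exact_mod_cast hkd
  have hz2z1 : (wordDist S z₂ z₁ : ℝ) ≤ 4 * δ := by
    rw [wordDist_comm hgen]
    exact hz₂d
  have hz1m : (wordDist S z₁ m : ℝ) ≤ 4 * δ := by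
    rw [wordDist_comm hgen]
    exact hz₁d
  have hmf1 : (wordDist S m (g₀ * f₁) : ℝ) ≤ ε := by
    have h' := wordDist_left_invariant (S := S) g₀ m' f₁
    rw [hmdef, h']
    exact_mod_cast hf₁d
  have hbig : (wordLength S s : ℝ) ≤ 2 * ε + 8 * δ := by
    rw [hslen]
    have htr1R : (wordDist S k (g₀ * f₁) : ℝ)
        ≤ (wordDist S k z₂ : ℝ) + (wordDist S z₂ (g₀ * f₁) : ℝ) := by exact_mod_cast htr1
    have htr2R : (wordDist S z₂ (g₀ * f₁) : ℝ)
        ≤ (wordDist S z₂ z₁ : ℝ) + (wordDist S z₁ (g₀ * f₁) : ℝ) := by exact_mod_cast htr2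
    have htr3R : (wordDist S z₁ (g₀ * f₁) : ℝ)
        ≤ (wordDist S z₁ m : ℝ) + (wordDist S m (g₀ * f₁) : ℝ) := by exact_mod_cast htr3
    linarith
  have hsbound : wordLength S s ≤ 2 * ε + D := by
    have hR : (wordLength S s : ℝ) ≤ ((2 * ε + D : ℕ) : ℝ) := by
      push_cast
      linarith
    exact_mod_cast hR
  have := hmin s hsF
  omega

end Main


/-- an infinite normal subgroup of infinite index in a word hyperbolic
group is not quasiconvex. -/
theorem stmt9 {G : Type*} [Group G] (S : Set G) (hS : IsFinGenSet S)
    (hhyp : IsHyperbolic S) (F : Subgroup G) [F.Normal]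
    (hinf : Infinite F) (hindex : F.index = 0) :
    ¬ IsQuasiconvex S F := by
  rintro ⟨ε, hqc⟩
  obtain ⟨hfin, hgen⟩ := hS
  obtain ⟨δ, hδ, hfour⟩ := hhyp
  set B : ℕ := 2 * ε + Nat.ceil (8 * δ) with hB
  have key := key_bound hfin hgen hδ hfour F hinf hqc
  have hsurj : (Set.univ : Set (G ⧸ F)) ⊆
      QuotientGroup.mk '' {u : G | wordLength S u ≤ B} := by
    rintro q -
    obtain ⟨g, rfl⟩ := QuotientGroup.mk_surjective q
    obtain ⟨g₀, hg₀F, hg₀len⟩ := key g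
    exact ⟨g₀, hg₀len, (QuotientGroup.eq.mpr hg₀F).symm⟩
  have hfinQ : Finite (G ⧸ F) :=
    Set.finite_univ_iff.mp (((ball_finite hfin hgen B).image _).subset hsurj)
  exact Subgroup.index_ne_zero_of_finite hindex
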